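/- Suppose N* divides N. Then the core of the coalitional game v^FS consists of exactly one element: the vector u ∈ ℝ^N with u_i = g^FS(N*) for every i ∈ {1,…,N}. -/

import Mathlib

open Filter Finset

/-- The benefit function `f` with its first and second derivatives, together with
the maximizer map `α ↦ x̂_α` (the unique `x ≥ 0` with `f'(x̂_α) = α` for `α ∈ (0, f'(0)]`). -/
structure BenefitFun where
  f : ℝ → ℝ
  f' : ℝ → ℝ
  f'' : ℝ → ℝ
  xhat : ℝ → ℝ
  f_zero : f 0 = 0
  f_nonneg : ∀ x : ℝ, 0 ≤ x → 0 ≤ f x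
  hasDeriv : ∀ x ∈ Set.Ici (0:ℝ), HasDerivWithinAt f (f' x) (Set.Ici 0) x
  hasDeriv' : ∀ x ∈ Set.Ici (0:ℝ), HasDerivWithinAt f' (f'' x) (Set.Ici 0) x
  cont_f'' : ContinuousOn f'' (Set.Ici 0)
  f'_pos : ∀ x : ℝ, 0 < x → 0 < f' x
  f''_neg : ∀ x : ℝ, 0 < x → f'' x < 0
  f'_tendsto : Filter.Tendsto f' Filter.atTop (nhds 0)
  xhat_nonneg : ∀ α : ℝ, 0 < α → α ≤ f' 0 → 0 ≤ xhat α
  xhat_spec : ∀ α : ℝ, 0 < α → α ≤ f' 0 → f' (xhat α) = α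
  xhat_unique : ∀ α : ℝ, 0 < α → α ≤ f' 0 → ∀ x : ℝ, 0 ≤ x → f' x = α → x = xhat α
  xhat_max : ∀ α : ℝ, 0 < α → α ≤ f' 0 → ∀ x : ℝ, 0 ≤ x → f x - α * x ≤ f (xhat α) - α * xhat α

/-- `f*(α) = f(x̂_α) − α·x̂_α = sup_{x ≥ 0} (f(x) − α x)`. -/
noncomputable def BenefitFun.fstar (B : BenefitFun) (α : ℝ) : ℝ :=
  B.f (B.xhat α) - α * B.xhat α

/-- `β̃(n) = (1/n)·κ + ((n−1)/n)·(δ+σ)`. -/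
noncomputable def btilde (κ δ σ : ℝ) (n : ℕ) : ℝ :=
  (1 / (n:ℝ)) * κ + (((n:ℝ) - 1) / (n:ℝ)) * (δ + σ)

/-- `x̃_α`: the maximizer of `f(x) − α x` over `x ≥ 0`
(`x̂_α` if `α ≤ f'(0)`, and `0` otherwise). -/
noncomputable def xtil (B : BenefitFun) (α : ℝ) : ℝ :=
  if α ≤ B.f' 0 then B.xhat α else 0

/-- `g^FS(n) = f(x̃_{γ̃(n)}) − β̃(n)·x̃_{γ̃(n)}` for `n ≥ 1`, with `γ̃(n) = κ + (n−1)σ`,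
and `g^FS(0) = 0`. -/
noncomputable def gFS (B : BenefitFun) (κ δ σ : ℝ) (n : ℕ) : ℝ :=
  if n = 0 then 0
  else B.f (xtil B (κ + ((n:ℝ) - 1) * σ)) - btilde κ δ σ n * xtil B (κ + ((n:ℝ) - 1) * σ)

/-- `v^FS(S) = ⌊|S|/N*⌋·N*·g^FS(N*) + r·g^FS(r)` where `r = |S| mod N*`. -/
noncomputable def vFS (B : BenefitFun) (κ δ σ : ℝ) (Nstar : ℕ) {N : ℕ}
    (S : Finset (Fin N)) : ℝ :=
  ((S.card / Nstar : ℕ) : ℝ) * (Nstar : ℝ) * gFS B κ δ σ Nstar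
    + ((S.card % Nstar : ℕ) : ℝ) * gFS B κ δ σ (S.card % Nstar)

/-- `u` is in the core of the set function `w`:
`∑ᵢ uᵢ = w({1,…,N})` and `∑_{i∈S} uᵢ ≥ w(S)` for every `S`. -/
def InCore {N : ℕ} (w : Finset (Fin N) → ℝ) (u : Fin N → ℝ) : Prop :=
  (∑ i, u i) = w Finset.univ ∧ ∀ S : Finset (Fin N), w S ≤ ∑ i ∈ S, u i

theorem stmt15 (B : BenefitFun) (N : ℕ) (hN : 2 ≤ N)
    (κ δ σ : ℝ) (hκ : 0 < κ) (hδ : 0 < δ) (hσ : 0 < σ)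
    (hcost : δ + σ < κ) (hκf : κ < B.f' 0)
    (Nstar : ℕ) (hNs : 0 < Nstar) (hNsN : Nstar < N)
    (hopt : ∀ n : ℕ, 0 < n → n ≠ Nstar → gFS B κ δ σ n < gFS B κ δ σ Nstar)
    (hdvd : Nstar ∣ N) :
    ∀ u : Fin N → ℝ,
      InCore (vFS B κ δ σ Nstar) u ↔ ∀ i, u i = gFS B κ δ σ Nstar := by
  intro u
  set g := gFS B κ δ σ Nstar with hg
  have hg0 : gFS B κ δ σ 0 = 0 := by simp [gFS]
  have hmul : ∀ r : ℕ, (r:ℝ) * gFS B κ δ σ r ≤ (r:ℝ) * g := by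
    intro r
    rcases Nat.eq_zero_or_pos r with h0 | hpos
    · subst h0; simp [hg0]
    · rcases eq_or_ne r Nstar with h | h
      · subst h; exact le_refl _
      · exact mul_le_mul_of_nonneg_left (le_of_lt (hopt r hpos h)) (by positivity)
  have hvle : ∀ S : Finset (Fin N), vFS B κ δ σ Nstar S ≤ (S.card:ℝ) * g := by
    intro S
    have hdm := Nat.div_add_mod S.card Nstar
    calc vFS B κ δ σ Nstar S
        ≤ ((S.card / Nstar : ℕ):ℝ) * (Nstar:ℝ) * g + ((S.card % Nstar : ℕ):ℝ) * g :=
          add_le_add le_rfl (hmul _)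
      _ = ((Nstar * (S.card / Nstar) + S.card % Nstar : ℕ):ℝ) * g := by push_cast; ring
      _ = (S.card:ℝ) * g := by rw [Nat.div_add_mod]
  have hveq : ∀ S : Finset (Fin N), Nstar ∣ S.card →
      vFS B κ δ σ Nstar S = (S.card:ℝ) * g := by
    intro S hS
    obtain ⟨k, hk⟩ := id hS
    have hm : S.card % Nstar = 0 := by rw [hk]; exact Nat.mul_mod_right Nstar k
    have hd : (S.card / Nstar) * Nstar = S.card := Nat.div_mul_cancel hS
    have hc : ((S.card / Nstar : ℕ):ℝ) * (Nstar:ℝ) = (S.card:ℝ) := by exact_mod_cast hd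
    unfold vFS
    rw [hm, hg0, hc]
    push_cast
    ring
  have hNcard : (Finset.univ : Finset (Fin N)).card = N := by simp
  have huniv : vFS B κ δ σ Nstar (Finset.univ : Finset (Fin N)) = (N:ℝ) * g := by
    rw [hveq _ (by rw [hNcard]; exact hdvd), hNcard]
  constructor
  · rintro ⟨hsum, hcore⟩ i
    have hsum' : ∑ j, u j = (N:ℝ) * g := hsum.trans huniv
    have hAeq : ∀ S : Finset (Fin N), Nstar ∣ S.card →
        ∑ j ∈ S, u j = (S.card:ℝ) * g := by
      intro S hS
      have h1 : (S.card:ℝ) * g ≤ ∑ j ∈ S, u j := (hveq S hS) ▸ hcore S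
      have hle : S.card ≤ N := by simpa using S.card_le_univ
      have hcardc : Sᶜ.card = N - S.card := by simp [Finset.card_compl]
      have hSc : Nstar ∣ Sᶜ.card := by rw [hcardc]; exact Nat.dvd_sub hdvd hS
      have h2 : (Sᶜ.card:ℝ) * g ≤ ∑ j ∈ Sᶜ, u j := (hveq _ hSc) ▸ hcore Sᶜ
      have h3 : ∑ j ∈ S, u j + ∑ j ∈ Sᶜ, u j = (N:ℝ) * g := by
        rw [Finset.sum_add_sum_compl]; exact hsum'
      have h4 : (Sᶜ.card:ℝ) = (N:ℝ) - (S.card:ℝ) := by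
        rw [hcardc]; push_cast [hle]; ring
      rw [h4] at h2
      linarith
    have hall : ∀ j : Fin N, u j = u i := by
      intro j
      rcases eq_or_ne j i with rfl | hji
      · rfl
      · have hij : i ∈ (Finset.univ : Finset (Fin N)).erase j := by
          simp [Ne.symm hji]
        have hcard_e : (((Finset.univ : Finset (Fin N)).erase j).erase i).card = N - 2 := by
          rw [Finset.card_erase_of_mem hij, Finset.card_erase_of_mem (Finset.mem_univ j),
            hNcard]
          omega
        obtain ⟨S, hSsub, hScard⟩ := Finset.exists_subset_card_eq
          (s := ((Finset.univ : Finset (Fin N)).erase j).erase i) (n := Nstar - 1)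
          (by rw [hcard_e]; omega)
        have hiS : i ∉ S := fun h => (Finset.notMem_erase i _) (hSsub h)
        have hjS : j ∉ S := fun h =>
          (Finset.notMem_erase j _) (Finset.mem_of_mem_erase (hSsub h))
        have hci : (insert i S).card = Nstar := by
          rw [Finset.card_insert_of_notMem hiS, hScard]; omega
        have hcj : (insert j S).card = Nstar := by
          rw [Finset.card_insert_of_notMem hjS, hScard]; omega
        have hi' := hAeq (insert i S) (hci ▸ dvd_refl Nstar)
        have hj' := hAeq (insert j S) (hcj ▸ dvd_refl Nstar)
        rw [Finset.sum_insert hiS, hci] at hi'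
        rw [Finset.sum_insert hjS, hcj] at hj'
        linarith
    have hsum2 : ∑ j, u j = (N:ℝ) * u i := by
      rw [Finset.sum_congr rfl (fun j _ => hall j), Finset.sum_const, hNcard]
      push_cast; ring
    have hN0 : (0:ℝ) < (N:ℝ) := by positivity
    have : (N:ℝ) * u i = (N:ℝ) * g := by linarith [hsum2, hsum']
    exact mul_left_cancel₀ (ne_of_gt hN0) this
  · intro h
    constructor
    · rw [huniv, Finset.sum_congr rfl (fun j _ => h j), Finset.sum_const, hNcard]
      push_cast; ring
    · intro S
      calc vFS B κ δ σ Nstar S ≤ (S.card:ℝ) * g := hvle S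
        _ = ∑ j ∈ S, u j := by
          rw [Finset.sum_congr rfl (fun j _ => h j), Finset.sum_const]
          push_cast; ring
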